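/- Let n ≥ 2 be an integer and r > c > 0. Let β^NN be the unique β ∈ (0,1) with β·log(β·r/c) = 1 − β, and let β^N be the unique β ∈ (0,1) with n·β·log(β·r/c) = 1 − β. Then β^NN > β^N, and consequently the equilibrium ISP effort per CP is strictly higher in the non-neutral regime: β^NN·r/c − 1 > β^N·r/c − 1. -/
import Mathlib


/-- For `n ≥ 2` and `r > c > 0`, the non-neutral equilibrium share exceeds the neutral one,
and hence the equilibrium ISP effort per CP is strictly higher in the non-neutral regime. -/
theorem stmt_8 (n : ℕ) (hn : 2 ≤ n) (r c : ℝ) (hc : 0 < c) (hrc : c < r)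
    (βNN βN : ℝ)
    (hmemNN : βNN ∈ Set.Ioo (0 : ℝ) 1)
    (heqNN : βNN * Real.log (βNN * r / c) = 1 - βNN)
    (hmemN : βN ∈ Set.Ioo (0 : ℝ) 1)
    (heqN : (n : ℝ) * βN * Real.log (βN * r / c) = 1 - βN) :
    βN < βNN ∧ βN * r / c - 1 < βNN * r / c - 1 := by
  obtain ⟨hNN0, hNN1⟩ := hmemNN
  obtain ⟨hN0, hN1⟩ := hmemN
  have hr : 0 < r := hc.trans hrc
  have hn2 : (2 : ℝ) ≤ (n : ℝ) := by exact_mod_cast hn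
  have hlogNN : 0 < Real.log (βNN * r / c) := by
    nlinarith [heqNN, hNN0, hNN1]
  have hmain : βN < βNN := by
    by_contra h
    push_neg at h
    have hposNN : 0 < βNN * r / c := by positivity
    have hle : βNN * r / c ≤ βN * r / c := by
      have := mul_le_mul_of_nonneg_right h hr.le
      exact div_le_div_of_nonneg_right this hc.le
    have hlogle : Real.log (βNN * r / c) ≤ Real.log (βN * r / c) :=
      Real.log_le_log hposNN hle
    have hlogN : 0 < Real.log (βN * r / c) := lt_of_lt_of_le hlogNN hlogle
    have key : βNN * Real.log (βNN * r / c) ≤ βN * Real.log (βN * r / c) :=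
      mul_le_mul h hlogle hlogNN.le hN0.le
    have hge2 : 2 * (βN * Real.log (βN * r / c)) ≤ (n : ℝ) * βN * Real.log (βN * r / c) := by
      have hp : 0 ≤ βN * Real.log (βN * r / c) := by positivity
      nlinarith
    nlinarith [key, hge2, heqN, heqNN]
  refine ⟨hmain, ?_⟩
  have h2 : βN * r / c < βNN * r / c := by
    have : βN * r < βNN * r := mul_lt_mul_of_pos_right hmain hr
    exact div_lt_div_of_pos_right this hc
  linarith
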